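/- Let Ψ(t) be a solution of the Toda flow Ψ' = -A(ΨΛΨ⁻¹)Ψ on SO(n,ℝ). For a fixed k and fixed columns i₁ < ... < i_k, the minor M(t) of Ψ(t) formed by the first k rows and columns i₁,...,i_k satisfies a linear ODE M'(t) = f(t)M(t) for some continuous function f; consequently if M(0) = 0 then M(t) = 0 for all t. -/

import Mathlib

open Matrix

/-- The antisymmetrization `A(L) = L₊ - L₋` of a matrix. -/
def antisymmetrize {n : ℕ} (L : Matrix (Fin n) (Fin n) ℝ) : Matrix (Fin n) (Fin n) ℝ :=
  Matrix.of fun i j => if i < j then L i j else if j < i then -(L i j) else 0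

/-- Jacobi's formula: the derivative of the determinant. -/
lemma det_hasDerivAt' {k : ℕ} {S : ℝ → Matrix (Fin k) (Fin k) ℝ}
    {V : Matrix (Fin k) (Fin k) ℝ} {t : ℝ}
    (h : ∀ i j, HasDerivAt (fun s => S s i j) (V i j) t) :
    HasDerivAt (fun s => (S s).det) ((Matrix.adjugate (S t) * V).trace) t := by
  have hterm : ∀ σ : Equiv.Perm (Fin k),
      HasDerivAt (fun s => ∏ i, S s (σ i) i)
        (∑ i, (∏ j ∈ Finset.univ.erase i, S t (σ j) j) * V (σ i) i) t := by
    intro σ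
    have := HasDerivAt.fun_finsetProd (u := Finset.univ)
      (f := fun i s => S s (σ i) i) (f' := fun i => V (σ i) i) (x := t)
      (fun i _ => h (σ i) i)
    simpa [smul_eq_mul] using this
  have hdet : HasDerivAt (fun s => (S s).det)
      (∑ σ : Equiv.Perm (Fin k), ((Equiv.Perm.sign σ : ℤ) : ℝ) *
        ∑ i, (∏ j ∈ Finset.univ.erase i, S t (σ j) j) * V (σ i) i) t := by
    have := HasDerivAt.fun_sum (u := Finset.univ)
      (A := fun (σ : Equiv.Perm (Fin k)) s => ((Equiv.Perm.sign σ : ℤ) : ℝ) * ∏ i, S s (σ i) i)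
      (A' := fun σ => ((Equiv.Perm.sign σ : ℤ) : ℝ) *
        ∑ i, (∏ j ∈ Finset.univ.erase i, S t (σ j) j) * V (σ i) i)
      (fun σ _ => (hterm σ).const_mul _)
    have heq : (fun s => (S s).det)
        = fun s => ∑ σ : Equiv.Perm (Fin k), ((Equiv.Perm.sign σ : ℤ) : ℝ) * ∏ i, S s (σ i) i := by
      funext s; rw [Matrix.det_apply']
    rw [heq]
    exact this
  have expand : ∀ (i : Fin k) (b : Fin k → ℝ),
      ((S t).updateCol i b).det
      = ∑ σ : Equiv.Perm (Fin k), ((Equiv.Perm.sign σ : ℤ) : ℝ) *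
          (b (σ i) * ∏ j ∈ Finset.univ.erase i, S t (σ j) j) := by
    intro i b
    rw [Matrix.det_apply']
    refine Finset.sum_congr rfl fun σ _ => ?_
    congr 1
    rw [← Finset.mul_prod_erase _ _ (Finset.mem_univ i)]
    congr 1
    · simp [Matrix.updateCol_apply]
    · exact Finset.prod_congr rfl fun j hj => by
        simp [Matrix.updateCol_apply, Finset.ne_of_mem_erase hj]
  have htrace : (Matrix.adjugate (S t) * V).trace
      = ∑ i, ((S t).updateCol i (fun r => V r i)).det := by
    have hcr : ∀ i : Fin k, ((S t).updateCol i (fun r => V r i)).det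
        = (Matrix.adjugate (S t) *ᵥ (fun r => V r i)) i := by
      intro i
      rw [← Matrix.cramer_eq_adjugate_mulVec, Matrix.cramer_apply]
    simp only [hcr]
    simp [Matrix.trace, Matrix.diag, Matrix.mul_apply, Matrix.mulVec, dotProduct]
  convert hdet using 1
  rw [htrace]
  simp only [expand]
  rw [Finset.sum_comm]
  refine Finset.sum_congr rfl fun σ _ => ?_
  rw [Finset.mul_sum]
  refine Finset.sum_congr rfl fun i _ => ?_
  ring

/-- Restricting a sum over `Fin n` to the first `k` indices when the rest vanish. -/
lemma sum_fin_restrict {n k : ℕ} (hk : k ≤ n) (g : Fin n → ℝ)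
    (hg : ∀ m : Fin n, k ≤ (m : ℕ) → g m = 0) :
    ∑ m : Fin n, g m = ∑ b : Fin k, g (Fin.castLE hk b) := by
  set G : ℕ → ℝ := fun i => if h : i < n then g ⟨i, h⟩ else 0 with hG
  have h1 : ∑ m : Fin n, g m = ∑ i ∈ Finset.range n, G i := by
    rw [← Fin.sum_univ_eq_sum_range]
    refine Finset.sum_congr rfl fun m _ => ?_
    simp [hG, m.isLt]
  have h2 : ∑ b : Fin k, g (Fin.castLE hk b) = ∑ i ∈ Finset.range k, G i := by
    rw [← Fin.sum_univ_eq_sum_range]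
    refine Finset.sum_congr rfl fun b _ => ?_
    have hb : (b : ℕ) < n := lt_of_lt_of_le b.isLt hk
    simp only [hG, dif_pos hb]
    rfl
  rw [h1, h2]
  refine (Finset.sum_subset (Finset.range_subset_range.2 hk) fun i hi hik => ?_).symm
  have h1' : i < n := Finset.mem_range.1 hi
  have h2' : k ≤ i := le_of_not_gt (fun hh => hik (Finset.mem_range.2 hh))
  simp only [hG, dif_pos h1']
  exact hg ⟨i, h1'⟩ h2'

/-- For a solution of the Toda flow `Ψ' = -A(ΨΛΨ⁻¹)Ψ` on `SO(n,ℝ)`, the minor of `Ψ`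
on the first `k` rows and columns `i₁ < … < i_k` satisfies a linear ODE `M' = f·M`; in
particular its zero set is invariant: if `M(0) = 0` then `M(t) = 0` for all `t`. -/
theorem toda_minor_evolution {n : ℕ} (lam : Fin n → ℝ)
    (Ψ : ℝ → Matrix (Fin n) (Fin n) ℝ)
    (horth : ∀ t, Ψ t * (Ψ t)ᵀ = 1)
    (hΨ : ∀ t i j, HasDerivAt (fun s => Ψ s i j)
      ((-(antisymmetrize (Ψ t * Matrix.diagonal lam * (Ψ t)ᵀ)) * Ψ t) i j) t)
    (k : ℕ) (hk : k ≤ n) (cols : Fin k → Fin n) (hcols : StrictMono cols) :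
    ∃ f : ℝ → ℝ, Continuous f ∧
      (∀ t, HasDerivAt
        (fun s => ((Ψ s).submatrix (fun a : Fin k => Fin.castLE hk a) cols).det)
        (f t * ((Ψ t).submatrix (fun a : Fin k => Fin.castLE hk a) cols).det) t) ∧
      (((Ψ 0).submatrix (fun a : Fin k => Fin.castLE hk a) cols).det = 0 →
        ∀ t, ((Ψ t).submatrix (fun a : Fin k => Fin.castLE hk a) cols).det = 0) := by
  classical
  set r : Fin k → Fin n := fun a => Fin.castLE hk a with hr
  set S : ℝ → Matrix (Fin k) (Fin k) ℝ := fun s => (Ψ s).submatrix r cols with hS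
  set L : ℝ → Matrix (Fin n) (Fin n) ℝ := fun s => Ψ s * Matrix.diagonal lam * (Ψ s)ᵀ with hL
  set f : ℝ → ℝ := fun s => (∑ a : Fin k, L s (r a) (r a)) - ∑ b : Fin k, lam (cols b) with hf
  -- continuity of matrix entries
  have hcontΨ : ∀ i j, Continuous fun s => Ψ s i j := by
    intro i j
    rw [continuous_iff_continuousAt]
    exact fun t => (hΨ t i j).continuousAt
  have hLentry : ∀ i : Fin n, (fun s => L s i i) = fun s => ∑ p, Ψ s i p * lam p * Ψ s i p := by
    intro i
    funext s
    show (Ψ s * Matrix.diagonal lam * (Ψ s)ᵀ) i i = _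
    rw [Matrix.mul_apply]
    refine Finset.sum_congr rfl fun p _ => ?_
    rw [Matrix.mul_diagonal, Matrix.transpose_apply]
  have hfc : Continuous f := by
    apply Continuous.sub _ continuous_const
    apply continuous_finset_sum
    intro a _
    rw [hLentry]
    apply continuous_finset_sum
    intro p _
    exact ((hcontΨ _ p).mul continuous_const).mul (hcontΨ _ p)
  -- the ODE
  have hode : ∀ t, HasDerivAt (fun s => (S s).det) (f t * (S t).det) t := by
    intro t
    -- decompose -A(L) = X - L
    set X : Matrix (Fin n) (Fin n) ℝ := Matrix.of fun i j =>
      if j < i then 2 * L t i j else if i = j then L t i i else 0 with hX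
    have hB : -(antisymmetrize (L t)) = X - L t := by
      ext i j
      rcases lt_trichotomy i j with hij | hij | hij
      · simp [antisymmetrize, hX, hij, not_lt_of_gt hij, ne_of_lt hij]
      · subst hij; simp [antisymmetrize, hX, lt_irrefl]
      · simp only [antisymmetrize, hX, Matrix.neg_apply, Matrix.of_apply, Matrix.sub_apply,
          if_pos hij, if_neg (not_lt_of_gt hij), if_neg (ne_of_gt hij)]
        ring
    have horth' : (Ψ t)ᵀ * Ψ t = 1 := mul_eq_one_comm.mp (horth t)
    have hLΨ : L t * Ψ t = Ψ t * Matrix.diagonal lam := by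
      rw [hL]
      calc Ψ t * Matrix.diagonal lam * (Ψ t)ᵀ * Ψ t
          = Ψ t * Matrix.diagonal lam * ((Ψ t)ᵀ * Ψ t) := by rw [Matrix.mul_assoc]
        _ = Ψ t * Matrix.diagonal lam := by rw [horth', Matrix.mul_one]
    set T : Matrix (Fin k) (Fin k) ℝ := Matrix.of fun a b => X (r a) (r b) with hT
    set D : Matrix (Fin k) (Fin k) ℝ := Matrix.diagonal (fun b => lam (cols b)) with hD
    set V : Matrix (Fin k) (Fin k) ℝ := T * S t - S t * D with hV
    -- the entrywise derivative
    have hder : ∀ a b : Fin k, HasDerivAt (fun s => S s a b) (V a b) t := by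
      intro a b
      have h1 := hΨ t (r a) (cols b)
      have hXpart : (X * Ψ t) (r a) (cols b) = (T * S t) a b := by
        rw [Matrix.mul_apply, Matrix.mul_apply]
        rw [sum_fin_restrict hk (fun m => X (r a) m * Ψ t m (cols b)) ?_]
        · rfl
        · intro m hm
          show X (r a) m * Ψ t m (cols b) = 0
          have hak : (a : ℕ) < k := a.isLt
          have hX0 : X (r a) m = 0 := by
            have h1' : ¬ (m < r a) := by
              simp only [Fin.lt_iff_val_lt_val]
              have : ((r a : Fin n) : ℕ) = (a : ℕ) := rfl
              omega
            have h2' : ¬ (r a = m) := by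
              intro hc
              have := congrArg Fin.val hc
              have hva : ((r a : Fin n) : ℕ) = (a : ℕ) := rfl
              omega
            simp [hX, h1', h2']
          rw [hX0, zero_mul]
      have hSD : (L t * Ψ t) (r a) (cols b) = (S t * D) a b := by
        rw [hLΨ, hD, Matrix.mul_diagonal, Matrix.mul_diagonal]
        rfl
      have h2 : ((-(antisymmetrize (L t))) * Ψ t) (r a) (cols b) = V a b := by
        rw [hB, Matrix.sub_mul, Matrix.sub_apply, hXpart, hSD, hV, Matrix.sub_apply]
      rw [h2] at h1
      exact h1
    have hkey := det_hasDerivAt' hder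
    have htr : (Matrix.adjugate (S t) * V).trace = f t * (S t).det := by
      have e1 : Matrix.adjugate (S t) * V
          = Matrix.adjugate (S t) * (T * S t) - Matrix.adjugate (S t) * (S t * D) := by
        rw [hV, Matrix.mul_sub]
      rw [e1, Matrix.trace_sub]
      have e2 : (Matrix.adjugate (S t) * (T * S t)).trace = (S t).det * T.trace := by
        rw [← Matrix.mul_assoc, Matrix.trace_mul_comm, ← Matrix.mul_assoc,
          Matrix.mul_adjugate, Matrix.smul_mul, Matrix.one_mul, Matrix.trace_smul, smul_eq_mul]
      have e3 : (Matrix.adjugate (S t) * (S t * D)).trace = (S t).det * D.trace := by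
        rw [← Matrix.mul_assoc, Matrix.adjugate_mul, Matrix.smul_mul, Matrix.one_mul,
          Matrix.trace_smul, smul_eq_mul]
      rw [e2, e3]
      have e4 : T.trace = ∑ a : Fin k, L t (r a) (r a) := by
        simp [Matrix.trace, Matrix.diag, hT, hX]
      have e5 : D.trace = ∑ b : Fin k, lam (cols b) := by
        simp [hD, Matrix.trace_diagonal]
      rw [e4, e5, hf]; ring
    rwa [htr] at hkey
  refine ⟨f, hfc, hode, ?_⟩
  intro h0 t
  set F : ℝ → ℝ := fun u => ∫ s in (0:ℝ)..u, f s with hFdef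
  have hF' : ∀ u, HasDerivAt F (f u) u := fun u =>
    intervalIntegral.integral_hasDerivAt_right (hfc.intervalIntegrable _ _)
      (hfc.stronglyMeasurableAtFilter _ _) hfc.continuousAt
  have hg : ∀ u, HasDerivAt (fun v => (S v).det * Real.exp (-(F v))) 0 u := by
    intro u
    have h1 := (hode u).fun_mul ((hF' u).fun_neg.exp)
    refine h1.congr_deriv ?_
    ring
  have hconst := is_const_of_deriv_eq_zero (𝕜 := ℝ)
    (f := fun v => (S v).det * Real.exp (-(F v)))
    (fun v => (hg v).differentiableAt) (fun v => (hg v).deriv) t 0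
  have hF0 : F 0 = 0 := intervalIntegral.integral_same
  rw [hF0, h0] at hconst
  simp only [zero_mul] at hconst
  rcases mul_eq_zero.mp hconst with h | h
  · exact h
  · exact absurd h (Real.exp_ne_zero _)
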